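/- Let 𝔅 be an admissible Banach space over a σ-compact space Λ and K ⊆ 𝔅 a strongly equicontinuous family. Then K is relatively compact in 𝔅 if and only if the family of absolute values |K| = {|w| : w ∈ K} is relatively compact in 𝔅. -/

import Mathlib

open scoped BigOperators

/-- An admissible Banach space `E` of `K`-valued families over `Λ`, given by a linear
embedding into `Λ → K`, which is solid, norm-determined by absolute values, contains
indicators of compact sets, and in which compactly supported elements are dense. -/
structure AdmissibleEmbedding (K : Type) [RCLike K] (Λ : Type) [TopologicalSpace Λ]
    (E : Type) [NormedAddCommGroup E] [NormedSpace K E] where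
  emb : E →ₗ[K] (Λ → K)
  inj : Function.Injective emb
  solid_exists : ∀ (w : Λ → K) (z : E), (∀ l, ‖w l‖ ≤ ‖emb z l‖) →
    ∃ w' : E, emb w' = w ∧ ‖w'‖ ≤ ‖z‖
  norm_abs : ∀ w w' : E, (∀ l, ‖emb w l‖ = ‖emb w' l‖) → ‖w‖ = ‖w'‖
  indicator_mem : ∀ Λ' : Set Λ, IsCompact Λ' → ∃ e : E, emb e = Λ'.indicator (fun _ => (1 : K))
  dense_compact : Dense {e : E | ∃ Λ' : Set Λ, IsCompact Λ' ∧ ∀ l, l ∉ Λ' → emb e l = 0}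

/-- A Banach frame `Φ = (φ_λ)` for `B` with associated admissible space `E`:
frame inequalities, a continuous reconstruction operator, and distinguished elements of `E`
representing the coefficient family, the phaseless coefficient family, and restricted
coefficient families. -/
structure BanachFramePR (K : Type) [RCLike K] (Λ : Type) [TopologicalSpace Λ]
    (B : Type) [NormedAddCommGroup B] [NormedSpace K B]
    (E : Type) [NormedAddCommGroup E] [NormedSpace K E]
    (adm : AdmissibleEmbedding K Λ E) where
  Φ : Λ → (B →L[K] K)
  contΦ : Continuous Φ
  coeff : B → E
  coeff_spec : ∀ x l, adm.emb (coeff x) l = Φ l x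
  absCoeff : B → E
  absCoeff_spec : ∀ x l, adm.emb (absCoeff x) l = (‖Φ l x‖ : K)
  restrict : Set Λ → B → E
  restrict_spec : ∀ (S : Set Λ) x l, adm.emb (restrict S x) l = S.indicator (fun l => Φ l x) l
  A : ℝ
  C : ℝ
  hA : 0 < A
  hAC : A ≤ C
  lower : ∀ x, A * ‖x‖ ≤ ‖coeff x‖
  upper : ∀ x, ‖coeff x‖ ≤ C * ‖x‖
  recon : E → B
  recon_cont : Continuous recon
  recon_left : ∀ x, recon (coeff x) = x

/-- The quotient distance `d(x,y) = inf_{|τ|=1} ‖x - τ • y‖`. -/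
noncomputable def phaseDist (K : Type) [RCLike K] {B : Type} [NormedAddCommGroup B]
    [NormedSpace K B] (x y : B) : ℝ :=
  sInf {r : ℝ | ∃ τ : K, ‖τ‖ = 1 ∧ r = ‖x - τ • y‖}


set_option linter.unusedSectionVars false in
section
namespace StmtAux

variable {K Λ E : Type} [RCLike K] [TopologicalSpace Λ]
  [NormedAddCommGroup E] [NormedSpace K E]

/-- Dominated elements have smaller norm. -/
lemma norm_le_of_dom (adm : AdmissibleEmbedding K Λ E) (u v : E)
    (h : ∀ l, ‖adm.emb u l‖ ≤ ‖adm.emb v l‖) : ‖u‖ ≤ ‖v‖ := by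
  obtain ⟨w', hw1, hw2⟩ := adm.solid_exists (adm.emb u) v h
  rwa [adm.inj hw1] at hw2

lemma indicator_norm_le (S : Set Λ) (f : Λ → K) (l : Λ) :
    ‖S.indicator f l‖ ≤ ‖f l‖ := by
  classical
  rw [Set.indicator_apply]; split_ifs <;> simp

/-- Restriction of an element to a set. -/
noncomputable def res (adm : AdmissibleEmbedding K Λ E) (S : Set Λ) (z : E) : E :=
  (adm.solid_exists (S.indicator (adm.emb z)) z (indicator_norm_le S _)).choose

lemma res_emb (adm : AdmissibleEmbedding K Λ E) (S : Set Λ) (z : E) :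
    adm.emb (res adm S z) = S.indicator (adm.emb z) :=
  (adm.solid_exists (S.indicator (adm.emb z)) z (indicator_norm_le S _)).choose_spec.1

lemma res_sub (adm : AdmissibleEmbedding K Λ E) (S : Set Λ) (z z' : E) :
    res adm S (z - z') = res adm S z - res adm S z' := by
  apply adm.inj
  rw [map_sub, res_emb, res_emb, res_emb, map_sub]
  ext l
  classical
  simp [Set.indicator_apply]
  split_ifs <;> simp

lemma res_lip (adm : AdmissibleEmbedding K Λ E) (S : Set Λ) (z z' : E) :
    ‖res adm S z - res adm S z'‖ ≤ ‖z - z'‖ := by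
  rw [← res_sub]
  apply norm_le_of_dom adm
  intro l
  rw [res_emb]
  exact indicator_norm_le S _ l

/-- Pointwise absolute value of an element. -/
noncomputable def eabs (adm : AdmissibleEmbedding K Λ E) (z : E) : E :=
  (adm.solid_exists (fun l => ((‖adm.emb z l‖ : ℝ) : K)) z
    (fun l => by simp [RCLike.norm_ofReal])).choose

lemma eabs_emb (adm : AdmissibleEmbedding K Λ E) (z : E) (l : Λ) :
    adm.emb (eabs adm z) l = ((‖adm.emb z l‖ : ℝ) : K) := by
  have := (adm.solid_exists (fun l => ((‖adm.emb z l‖ : ℝ) : K)) z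
    (fun l => by simp [RCLike.norm_ofReal])).choose_spec.1
  exact congrFun this l

lemma eabs_emb_norm (adm : AdmissibleEmbedding K Λ E) (z : E) (l : Λ) :
    ‖adm.emb (eabs adm z) l‖ = ‖adm.emb z l‖ := by
  rw [eabs_emb]; simp [RCLike.norm_ofReal]

lemma eabs_norm (adm : AdmissibleEmbedding K Λ E) (z : E) : ‖eabs adm z‖ = ‖z‖ :=
  adm.norm_abs _ _ (fun l => eabs_emb_norm adm z l)

lemma eabs_lip (adm : AdmissibleEmbedding K Λ E) (z z' : E) :
    ‖eabs adm z - eabs adm z'‖ ≤ ‖z - z'‖ := by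
  apply norm_le_of_dom adm
  intro l
  rw [map_sub]
  simp only [Pi.sub_apply, eabs_emb, ← RCLike.ofReal_sub, RCLike.norm_ofReal]
  rw [map_sub]
  exact (abs_norm_sub_norm_le _ _).trans (le_of_eq rfl)



/-- Point evaluations are bounded. -/
lemma eval_bound (adm : AdmissibleEmbedding K Λ E) (l : Λ) :
    ∃ c : ℝ, 0 < c ∧ ∀ w : E, ‖adm.emb w l‖ ≤ c * ‖w‖ := by
  obtain ⟨e, he⟩ := adm.indicator_mem {l} isCompact_singleton
  have hel : adm.emb e l = 1 := by rw [he]; simp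
  have hene : e ≠ 0 := by
    intro h0
    rw [h0, map_zero] at hel
    simpa using hel
  have hepos : 0 < ‖e‖ := norm_pos_iff.mpr hene
  refine ⟨‖e‖⁻¹, by positivity, fun w => ?_⟩
  have key : ‖(adm.emb w l) • e‖ ≤ ‖w‖ := by
    apply norm_le_of_dom adm
    intro m
    rw [map_smul]
    simp only [Pi.smul_apply, smul_eq_mul, norm_mul, he]
    by_cases hm : m = l
    · subst hm; simp
    · rw [Set.indicator_of_notMem (by simpa using hm)]
      simp
  rw [norm_smul] at key
  rw [inv_mul_eq_div, le_div_iff₀ hepos]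
  exact key

/-- Equi-small tails for a totally bounded set. -/
lemma equismall (adm : AdmissibleEmbedding K Λ E) (T : Set E) (h : TotallyBounded T)
    {ε : ℝ} (hε : 0 < ε) :
    ∃ S : Set Λ, IsCompact S ∧ ∀ w ∈ T, ‖res adm Sᶜ w‖ ≤ ε := by
  have h3 : 0 < ε / 3 := by linarith
  obtain ⟨t, hts, htfin, htcov⟩ := totallyBounded_iff_subset.mp h
    {p : E × E | dist p.1 p.2 < ε / 3} (Metric.dist_mem_uniformity h3)
  have hdense : ∀ y : E, ∃ c : E, ∃ S' : Set Λ, IsCompact S' ∧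
      (∀ l, l ∉ S' → adm.emb c l = 0) ∧ dist y c < ε / 3 := by
    intro y
    obtain ⟨c, hc1, hc2⟩ := Metric.dense_iff.mp adm.dense_compact y (ε/3) h3
    obtain ⟨S', hS'1, hS'2⟩ := hc2
    exact ⟨c, S', hS'1, hS'2, by rwa [dist_comm, ← Metric.mem_ball]⟩
  choose c S' hScomp hSzero hSdist using hdense
  refine ⟨⋃ y ∈ t, S' y, htfin.isCompact_biUnion (fun y _ => hScomp y), ?_⟩
  intro w hw
  obtain ⟨y, hy, hwy⟩ := Set.mem_iUnion₂.mp (htcov hw)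
  have hres0 : res adm (⋃ y ∈ t, S' y)ᶜ (c y) = 0 := by
    apply adm.inj
    rw [res_emb, map_zero]
    classical
    ext l
    rw [Set.indicator_apply]
    split_ifs with hl
    · exact hSzero y l (fun hmem => (Set.mem_compl_iff _ _).mp hl
        (Set.mem_biUnion hy hmem))
    · rfl
  calc ‖res adm (⋃ y ∈ t, S' y)ᶜ w‖
      ≤ ‖res adm (⋃ y ∈ t, S' y)ᶜ w - res adm (⋃ y ∈ t, S' y)ᶜ y‖
        + ‖res adm (⋃ y ∈ t, S' y)ᶜ y - res adm (⋃ y ∈ t, S' y)ᶜ (c y)‖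
        + ‖res adm (⋃ y ∈ t, S' y)ᶜ (c y)‖ := by
        have := norm_add₃_le (a := res adm (⋃ y ∈ t, S' y)ᶜ w - res adm (⋃ y ∈ t, S' y)ᶜ y)
          (b := res adm (⋃ y ∈ t, S' y)ᶜ y - res adm (⋃ y ∈ t, S' y)ᶜ (c y))
          (c := res adm (⋃ y ∈ t, S' y)ᶜ (c y))
        simpa using this
    _ ≤ ε/3 + ε/3 + ε/3 := by
        gcongr
        · exact (res_lip adm _ _ _).trans (by rw [← dist_eq_norm]; exact le_of_lt hwy)
        · exact (res_lip adm _ _ _).trans (by rw [← dist_eq_norm]; exact le_of_lt (hSdist y))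
        · rw [hres0]; simp; linarith
    _ = ε := by ring

end StmtAux
end

/-- A strongly equicontinuous family `𝒦` in an admissible Banach space is relatively
compact if and only if the family `|𝒦|` of its pointwise absolute values is relatively
compact. -/
theorem stmt_14 {K Λ E : Type} [RCLike K] [TopologicalSpace Λ] [SigmaCompactSpace Λ]
    [NormedAddCommGroup E] [NormedSpace K E] [CompleteSpace E]
    (adm : AdmissibleEmbedding K Λ E) (𝒦 : Set E)
    (hequi : ∀ ε : ℝ, 0 < ε → ∀ l : Λ, ∃ U ∈ nhds l, ∀ μ ∈ U, ∀ w ∈ 𝒦,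
      ‖adm.emb w μ - adm.emb w l‖ ≤ ε) :
    IsCompact (closure 𝒦) ↔
      IsCompact (closure {w2 : E | ∃ w ∈ 𝒦, ∀ l, adm.emb w2 l = (‖adm.emb w l‖ : K)}) := by
  classical
  have habseq : {w2 : E | ∃ w ∈ 𝒦, ∀ l, adm.emb w2 l = (‖adm.emb w l‖ : K)}
      = StmtAux.eabs adm '' 𝒦 := by
    ext w2
    constructor
    · rintro ⟨w, hw, hspec⟩
      refine ⟨w, hw, ?_⟩
      apply adm.inj
      ext l
      rw [StmtAux.eabs_emb, ← hspec l]
    · rintro ⟨w, hw, rfl⟩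
      exact ⟨w, hw, fun l => StmtAux.eabs_emb adm w l⟩
  rw [habseq]
  constructor
  · intro h
    have hlip : LipschitzWith 1 (StmtAux.eabs adm) :=
      LipschitzWith.of_dist_le_mul fun x y => by
        rw [dist_eq_norm, dist_eq_norm]
        simpa using StmtAux.eabs_lip adm x y
    have himg : IsCompact (StmtAux.eabs adm '' closure 𝒦) := h.image hlip.continuous
    exact himg.of_isClosed_subset isClosed_closure
      (closure_minimal (Set.image_mono subset_closure) himg.isClosed)
  · intro h
    apply TotallyBounded.isCompact_of_isClosed _ isClosed_closure
    apply TotallyBounded.closure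
    rw [Metric.totallyBounded_iff]
    intro ε hε
    have htb' : TotallyBounded (StmtAux.eabs adm '' 𝒦) :=
      h.totallyBounded.subset subset_closure
    obtain ⟨R₀, hR₀⟩ := isBounded_iff_forall_norm_le.mp htb'.isBounded
    set R := max R₀ 0 with hRdef
    have hR : ∀ w ∈ 𝒦, ‖w‖ ≤ R := fun w hw => by
      rw [← StmtAux.eabs_norm adm w]
      exact le_max_of_le_left (hR₀ _ (Set.mem_image_of_mem _ hw))
    -- equi-small tails at level ε/4
    obtain ⟨S, hScomp, hStail₀⟩ := StmtAux.equismall adm _ htb'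
      (show (0:ℝ) < ε/4 by linarith)
    have hStail : ∀ w ∈ 𝒦, ‖StmtAux.res adm Sᶜ w‖ ≤ ε/4 := by
      intro w hw
      have heq : ‖StmtAux.res adm Sᶜ w‖ = ‖StmtAux.res adm Sᶜ (StmtAux.eabs adm w)‖ := by
        apply adm.norm_abs
        intro l
        rw [StmtAux.res_emb, StmtAux.res_emb, Set.indicator_apply, Set.indicator_apply]
        split_ifs
        · exact (StmtAux.eabs_emb_norm adm w l).symm
        · simp
      rw [heq]
      exact hStail₀ _ (Set.mem_image_of_mem _ hw)
    obtain ⟨eS, heS⟩ := adm.indicator_mem S hScomp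
    set δ : ℝ := ε / (16 * (‖eS‖ + 1)) with hδdef
    have heSnn : (0:ℝ) ≤ ‖eS‖ := norm_nonneg _
    have hδpos : 0 < δ := by positivity
    choose U hU1 hU2 using hequi δ hδpos
    obtain ⟨t, ht⟩ := hScomp.elim_nhds_subcover U (fun l _ => hU1 l)
    choose cst hcst1 hcst2 using fun l => StmtAux.eval_bound adm l
    set V : E → (↥t → K) := fun w i => adm.emb w i.1 with hVdef
    have hVtb : TotallyBounded (V '' 𝒦) := by
      refine TotallyBounded.subset ?_
        ((isCompact_univ_pi (fun i : ↥t =>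
          isCompact_closedBall (0:K) (cst i.1 * R))).totallyBounded)
      rintro _ ⟨w, hw, rfl⟩
      rw [Set.mem_univ_pi]
      intro i
      rw [Metric.mem_closedBall, dist_zero_right]
      calc ‖V w i‖ ≤ cst i.1 * ‖w‖ := hcst2 i.1 w
        _ ≤ cst i.1 * R := mul_le_mul_of_nonneg_left (hR w hw) (le_of_lt (hcst1 i.1))
    obtain ⟨F, hFsub, hFfin, hFcov⟩ := totallyBounded_iff_subset.mp hVtb
      {p | dist p.1 p.2 < δ} (Metric.dist_mem_uniformity hδpos)
    have hrep : ∀ v ∈ F, ∃ w, w ∈ 𝒦 ∧ V w = v := fun v hv => by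
      obtain ⟨w, hw, hVw⟩ := hFsub hv
      exact ⟨w, hw, hVw⟩
    choose! rep hrep1 hrep2 using hrep
    refine ⟨rep '' F, hFfin.image _, ?_⟩
    intro w hw
    obtain ⟨v, hv, hwv⟩ := Set.mem_iUnion₂.mp (hFcov (Set.mem_image_of_mem V hw))
    have hwv' : dist (V w) v < δ := hwv
    rw [Set.mem_iUnion₂]
    refine ⟨rep v, Set.mem_image_of_mem _ hv, ?_⟩
    rw [Metric.mem_ball, dist_eq_norm]
    set w' := rep v with hw'def
    have hw'K : w' ∈ 𝒦 := hrep1 v hv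
    have hVww' : ∀ i : ↥t, ‖adm.emb w i.1 - adm.emb w' i.1‖ < δ := by
      intro i
      have h1 : dist (V w i) (v i) ≤ dist (V w) v := dist_le_pi_dist _ _ i
      have h2 : dist (V w i) (v i) < δ := lt_of_le_of_lt h1 hwv'
      have h3 : v i = adm.emb w' i.1 := by rw [← hrep2 v hv]
      rw [h3, dist_eq_norm] at h2
      exact h2
    have hosc : ∀ l ∈ S, ‖adm.emb (w - w') l‖ ≤ 3 * δ := by
      intro l hl
      obtain ⟨m, hm, hlm⟩ := Set.mem_iUnion₂.mp (ht.2 hl)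
      have h1 : ‖adm.emb w l - adm.emb w m‖ ≤ δ := hU2 m l hlm w hw
      have h2 : ‖adm.emb w' l - adm.emb w' m‖ ≤ δ := hU2 m l hlm w' hw'K
      have h3 : ‖adm.emb w m - adm.emb w' m‖ < δ := hVww' ⟨m, hm⟩
      have hsplit : adm.emb (w - w') l =
          (adm.emb w l - adm.emb w m) + (adm.emb w m - adm.emb w' m)
            + (adm.emb w' m - adm.emb w' l) := by
        rw [map_sub]
        simp only [Pi.sub_apply]
        ring
      rw [hsplit]
      calc ‖(adm.emb w l - adm.emb w m) + (adm.emb w m - adm.emb w' m)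
            + (adm.emb w' m - adm.emb w' l)‖
          ≤ ‖adm.emb w l - adm.emb w m‖ + ‖adm.emb w m - adm.emb w' m‖
            + ‖adm.emb w' m - adm.emb w' l‖ := norm_add₃_le
        _ ≤ δ + δ + δ :=
            add_le_add (add_le_add h1 (le_of_lt h3)) (by rw [norm_sub_rev]; exact h2)
        _ = 3 * δ := by ring
    have hin : ‖StmtAux.res adm S (w - w')‖ ≤ 3 * δ * ‖eS‖ := by
      have key : ‖StmtAux.res adm S (w - w')‖ ≤ ‖(((3 * δ : ℝ) : K)) • eS‖ := by
        apply StmtAux.norm_le_of_dom adm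
        intro l
        rw [StmtAux.res_emb, map_smul]
        simp only [Pi.smul_apply, smul_eq_mul, norm_mul, RCLike.norm_ofReal, heS]
        rw [Set.indicator_apply]
        split_ifs with hl
        · rw [Set.indicator_of_mem hl]
          simp only [norm_one, mul_one]
          calc ‖adm.emb (w - w') l‖ ≤ 3 * δ := hosc l hl
            _ ≤ |3 * δ| := le_abs_self _
        · rw [Set.indicator_of_notMem hl]
          simp
      rw [norm_smul, RCLike.norm_ofReal] at key
      calc ‖StmtAux.res adm S (w - w')‖ ≤ |3 * δ| * ‖eS‖ := key
        _ = 3 * δ * ‖eS‖ := by rw [abs_of_pos (by linarith)]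
    have hdecomp : w - w' = StmtAux.res adm S (w - w')
        + (StmtAux.res adm Sᶜ w - StmtAux.res adm Sᶜ w') := by
      apply adm.inj
      have e1 := StmtAux.res_emb adm S (w - w')
      have e2 := StmtAux.res_emb adm Sᶜ w
      have e3 := StmtAux.res_emb adm Sᶜ w'
      ext l
      simp only [map_add, map_sub, Pi.add_apply, Pi.sub_apply, e1, e2, e3]
      by_cases hl : l ∈ S
      · rw [Set.indicator_of_mem hl,
          Set.indicator_of_notMem (show l ∉ Sᶜ from by simpa using hl),
          Set.indicator_of_notMem (show l ∉ Sᶜ from by simpa using hl)]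
        simp
      · rw [Set.indicator_of_notMem hl,
          Set.indicator_of_mem (show l ∈ Sᶜ from hl),
          Set.indicator_of_mem (show l ∈ Sᶜ from hl)]
        simp
    have hδeS : 3 * δ * ‖eS‖ ≤ 3 * (ε / 16) := by
      have hkey : δ * ‖eS‖ ≤ ε / 16 := by
        rw [hδdef, div_mul_eq_mul_div, div_le_div_iff₀ (by positivity) (by norm_num)]
        nlinarith
      nlinarith
    calc ‖w - w'‖ ≤ ‖StmtAux.res adm S (w - w')‖
          + (‖StmtAux.res adm Sᶜ w‖ + ‖StmtAux.res adm Sᶜ w'‖) := by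
          conv_lhs => rw [hdecomp]
          exact (norm_add_le _ _).trans (add_le_add le_rfl (norm_sub_le _ _))
      _ ≤ 3 * (ε / 16) + (ε/4 + ε/4) := by
          gcongr
          · exact hin.trans hδeS
          · exact hStail w hw
          · exact hStail w' hw'K
      _ < ε := by linarith
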